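/- arXiv:1910.11694 — 3 statements merged into one kernel-verified Lean document; each statement's English description precedes it below -/
import Mathlib

section
/- Let P be a 2n×2n orthogonal symplectic matrix with ker(P − I) = 0, and define for u ∈ L²((0,s), ℝ^{2n}) the map (Π_s u)(t) = ∫₀ᵗ u(τ) dτ + (P − I)⁻¹ ∫₀ˢ u(τ) dτ. Then Π_s is antisymmetric with respect to the L² inner product: ∫₀ˢ (Π_s u, v) dt = − ∫₀ˢ (u, Π_s v) dt for all u, v ∈ L². -/
open Matrix MeasureTheory

/-- Primitive of the truncation of `f` to `(0,s]`. -/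
noncomputable def prim (s : ℝ) (f : ℝ → ℝ) : ℝ → ℝ :=
  fun t => ∫ τ in Set.Iic t, (Set.Ioc (0:ℝ) s).indicator f τ

lemma ind_integrable {s : ℝ} {f : ℝ → ℝ} (hf : IntegrableOn f (Set.Ioc 0 s)) :
    Integrable ((Set.Ioc (0:ℝ) s).indicator f) volume :=
  (integrable_indicator_iff measurableSet_Ioc).2 hf

lemma prim_eq {s : ℝ} {f : ℝ → ℝ} {t : ℝ} (ht : t ≤ s) :
    prim s f t = ∫ τ in Set.Ioc 0 t, f τ := by
  have h1 : Set.Iic t ∩ Set.Ioc (0:ℝ) s = Set.Ioc 0 t := by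
    ext x
    simp only [Set.mem_inter_iff, Set.mem_Iic, Set.mem_Ioc]
    constructor
    · rintro ⟨h1, h2, h3⟩; exact ⟨h2, h1⟩
    · rintro ⟨h1, h2⟩; exact ⟨h2, h1, h2.trans ht⟩
  rw [prim, ← integral_indicator measurableSet_Iic, Set.indicator_indicator, h1,
    integral_indicator measurableSet_Ioc]

lemma prim_cont {s : ℝ} {f : ℝ → ℝ} (hf : IntegrableOn f (Set.Ioc 0 s)) :
    Continuous (prim s f) := by
  have h := (ind_integrable hf).continuous_primitive 0
  have heq : ∀ t, prim s f t =
      (∫ x in (0:ℝ)..t, (Set.Ioc (0:ℝ) s).indicator f x) + prim s f 0 := by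
    intro t
    have := intervalIntegral.integral_Iic_sub_Iic
      ((ind_integrable hf).integrableOn (s := Set.Iic 0))
      ((ind_integrable hf).integrableOn (s := Set.Iic t))
    rw [prim, prim]
    linarith [this]
  rw [show prim s f = fun t => (∫ x in (0:ℝ)..t, (Set.Ioc (0:ℝ) s).indicator f x) + prim s f 0
    from funext heq]
  exact h.add continuous_const

lemma prim_bdd {s : ℝ} {f : ℝ → ℝ} (hf : IntegrableOn f (Set.Ioc 0 s)) :
    ∀ t, ‖prim s f t‖ ≤ ∫ τ, ‖(Set.Ioc (0:ℝ) s).indicator f τ‖ := by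
  intro t
  calc ‖prim s f t‖ ≤ ∫ τ in Set.Iic t, ‖(Set.Ioc (0:ℝ) s).indicator f τ‖ :=
        norm_integral_le_integral_norm _
    _ ≤ ∫ τ, ‖(Set.Ioc (0:ℝ) s).indicator f τ‖ :=
        setIntegral_le_integral (ind_integrable hf).norm
          (Filter.Eventually.of_forall fun x => norm_nonneg _)

lemma prim_mul_integrable {s : ℝ} {f g : ℝ → ℝ} (hf : IntegrableOn f (Set.Ioc 0 s))
    (hg : IntegrableOn g (Set.Ioc 0 s)) :
    Integrable (fun t => prim s f t * g t) (volume.restrict (Set.Ioc 0 s)) :=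
  hg.bdd_mul ((prim_cont hf).aestronglyMeasurable.restrict)
    (Filter.Eventually.of_forall (prim_bdd hf))

lemma mul_prim_integrable {s : ℝ} {f g : ℝ → ℝ} (hf : IntegrableOn f (Set.Ioc 0 s))
    (hg : IntegrableOn g (Set.Ioc 0 s)) :
    Integrable (fun t => f t * prim s g t) (volume.restrict (Set.Ioc 0 s)) :=
  (prim_mul_integrable hg hf).congr
    (Filter.Eventually.of_forall fun x => mul_comm _ _)

lemma key {s : ℝ} (hs : 0 < s) {f g : ℝ → ℝ} (hf : IntegrableOn f (Set.Ioc 0 s))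
    (hg : IntegrableOn g (Set.Ioc 0 s)) :
    ((∫ t in Set.Ioc 0 s, prim s f t * g t) + ∫ t in Set.Ioc 0 s, f t * prim s g t)
    = (∫ t in Set.Ioc 0 s, f t) * ∫ t in Set.Ioc 0 s, g t := by
  set f₀ : ℝ → ℝ := (Set.Ioc (0:ℝ) s).indicator f with hf₀def
  have hg' : Integrable g (volume.restrict (Set.Ioc 0 s)) := hg
  have hfub : Integrable (Function.uncurry fun t τ => (Set.Iic t).indicator f₀ τ * g t)
      ((volume.restrict (Set.Ioc 0 s)).prod volume) := by
    have base : Integrable (fun z : ℝ × ℝ => g z.1 * f₀ z.2)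
        ((volume.restrict (Set.Ioc 0 s)).prod volume) :=
      hg'.mul_prod (ind_integrable hf)
    have hset : MeasurableSet {p : ℝ × ℝ | p.2 ≤ p.1} :=
      measurableSet_le measurable_snd measurable_fst
    have heq : (Function.uncurry fun t τ => (Set.Iic t).indicator f₀ τ * g t)
        = {p : ℝ × ℝ | p.2 ≤ p.1}.indicator (fun z => g z.1 * f₀ z.2) := by
      funext p
      by_cases h : p.2 ≤ p.1
      · simp only [Function.uncurry, Set.indicator_of_mem, Set.mem_Iic, h,
          Set.indicator_of_mem (show p ∈ {p : ℝ × ℝ | p.2 ≤ p.1} from h)]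
        ring
      · simp [Function.uncurry, Set.indicator_of_notMem, h, Set.mem_Iic]
    rw [heq]
    exact base.indicator hset
  have step1 : (∫ t in Set.Ioc 0 s, prim s f t * g t)
      = ∫ t in Set.Ioc 0 s, ∫ τ, (Set.Iic t).indicator f₀ τ * g t := by
    refine integral_congr_ae (Filter.Eventually.of_forall fun t => ?_)
    simp only [prim]
    rw [← integral_indicator measurableSet_Iic, ← integral_mul_const]
  have step2 : (∫ t in Set.Ioc 0 s, ∫ τ, (Set.Iic t).indicator f₀ τ * g t)
      = ∫ τ, ∫ t in Set.Ioc 0 s, (Set.Iic t).indicator f₀ τ * g t :=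
    integral_integral_swap hfub
  have step3 : (∫ τ, ∫ t in Set.Ioc 0 s, (Set.Iic t).indicator f₀ τ * g t)
      = ∫ τ, f₀ τ * ∫ t in Set.Ici τ ∩ Set.Ioc 0 s, g t := by
    refine integral_congr_ae (Filter.Eventually.of_forall fun τ => ?_)
    have h1 : ∀ t, (Set.Iic t).indicator f₀ τ * g t = f₀ τ * (Set.Ici τ).indicator g t := by
      intro t
      by_cases h : τ ≤ t
      · simp [Set.indicator_of_mem, Set.mem_Iic.2 h, Set.mem_Ici.2 h]
      · simp [Set.indicator_of_notMem, h, Set.mem_Iic, Set.mem_Ici]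
    simp only [h1]
    rw [integral_const_mul, integral_indicator measurableSet_Ici,
      Measure.restrict_restrict measurableSet_Ici]
  have step4 : (∫ τ, f₀ τ * ∫ t in Set.Ici τ ∩ Set.Ioc 0 s, g t)
      = ∫ τ in Set.Ioc 0 s, f τ * ∫ t in Set.Ici τ ∩ Set.Ioc 0 s, g t := by
    rw [← integral_indicator measurableSet_Ioc]
    refine integral_congr_ae (Filter.Eventually.of_forall fun τ => ?_)
    by_cases h : τ ∈ Set.Ioc (0:ℝ) s
    · simp [hf₀def, Set.indicator_of_mem h]
    · simp [hf₀def, Set.indicator_of_notMem h]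
  have step5 : (∫ τ in Set.Ioc 0 s, f τ * ∫ t in Set.Ici τ ∩ Set.Ioc 0 s, g t)
      = ∫ τ in Set.Ioc 0 s, f τ * ((∫ t in Set.Ioc 0 s, g t) - prim s g τ) := by
    refine setIntegral_congr_fun measurableSet_Ioc fun τ hτ => ?_
    congr 1
    have h1 : Set.Ici τ ∩ Set.Ioc (0:ℝ) s = Set.Icc τ s := by
      ext x
      simp only [Set.mem_inter_iff, Set.mem_Ici, Set.mem_Ioc, Set.mem_Icc]
      constructor
      · rintro ⟨h1, _, h3⟩; exact ⟨h1, h3⟩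
      · rintro ⟨h1, h2⟩; exact ⟨h1, lt_of_lt_of_le hτ.1 h1, h2⟩
    have h2 : (∫ t in Set.Ioc 0 s, g t)
        = (∫ t in Set.Ioc 0 τ, g t) + ∫ t in Set.Ioc τ s, g t := by
      rw [← Set.Ioc_union_Ioc_eq_Ioc hτ.1.le hτ.2,
        setIntegral_union (Set.Ioc_disjoint_Ioc_of_le le_rfl) measurableSet_Ioc
          (hg.mono_set (Set.Ioc_subset_Ioc_right hτ.2))
          (hg.mono_set (Set.Ioc_subset_Ioc_left hτ.1.le))]
    rw [h1, integral_Icc_eq_integral_Ioc, prim_eq hτ.2, h2]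
    ring
  have step6 : (∫ τ in Set.Ioc 0 s, f τ * ((∫ t in Set.Ioc 0 s, g t) - prim s g τ))
      = (∫ τ in Set.Ioc 0 s, f τ) * (∫ t in Set.Ioc 0 s, g t)
        - ∫ τ in Set.Ioc 0 s, f τ * prim s g τ := by
    simp only [mul_sub]
    rw [integral_sub (hf.mul_const _) (mul_prim_integrable hf hg), integral_mul_const]
  rw [step1, step2, step3, step4, step5, step6]
  ring

lemma integral_pi_apply {α : Type*} [MeasurableSpace α] {μ : Measure α} {ι : Type*} [Fintype ι]
    {f : α → ι → ℝ} (hf : Integrable f μ) (i : ι) :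
    (∫ x, f x ∂μ) i = ∫ x, f x i ∂μ :=
  ((ContinuousLinearMap.proj (R := ℝ) (φ := fun _ : ι => ℝ) i).integral_comp_comm hf).symm

lemma integrable_pi_apply {α : Type*} [MeasurableSpace α] {μ : Measure α} {ι : Type*} [Fintype ι]
    {f : α → ι → ℝ} (hf : Integrable f μ) (i : ι) :
    Integrable (fun x => f x i) μ :=
  (ContinuousLinearMap.proj (R := ℝ) (φ := fun _ : ι => ℝ) i).integrable_comp hf

lemma matrixM {n : ℕ} (P : Matrix (Fin n ⊕ Fin n) (Fin n ⊕ Fin n) ℝ)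
    (horth : Pᵀ * P = 1)
    (hker : ∀ x : Fin n ⊕ Fin n → ℝ, P.mulVec x = x → x = 0) :
    (P - 1)⁻¹ + ((P - 1)⁻¹)ᵀ = -1 := by
  have hinj : Function.Injective (P - 1).mulVec := by
    intro x y hxy
    simp only [Matrix.sub_mulVec, Matrix.one_mulVec] at hxy
    have h2 : P.mulVec (x - y) = x - y := by
      rw [Matrix.mulVec_sub]
      calc P.mulVec x - P.mulVec y
          = (P.mulVec x - x) - (P.mulVec y - y) + (x - y) := by abel
        _ = x - y := by rw [hxy]; abel
    exact sub_eq_zero.1 (hker _ h2)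
  have hU : IsUnit (P - 1) := Matrix.mulVec_injective_iff_isUnit.1 hinj
  have hdet : IsUnit (P - 1).det := (Matrix.isUnit_iff_isUnit_det _).1 hU
  have hinv1 : (P - 1) * (P - 1)⁻¹ = 1 := Matrix.mul_nonsing_inv _ hdet
  have hinv2 : (P - 1)⁻¹ * (P - 1) = 1 := Matrix.nonsing_inv_mul _ hdet
  have h3 : (Pᵀ - 1) * (-((P - 1)⁻¹ * P)) = 1 := by
    have h4 : Pᵀ - 1 = -(Pᵀ * (P - 1)) := by rw [mul_sub, mul_one, horth, neg_sub]
    rw [h4, neg_mul_neg, mul_assoc Pᵀ (P - 1) _, ← mul_assoc (P - 1) (P - 1)⁻¹ P,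
      hinv1, one_mul, horth]
  have hMT : ((P - 1)⁻¹)ᵀ = -((P - 1)⁻¹ * P) := by
    rw [Matrix.transpose_nonsing_inv, Matrix.transpose_sub, Matrix.transpose_one]
    exact Matrix.inv_eq_right_inv h3
  rw [hMT]
  have h5 : (P - 1)⁻¹ + -((P - 1)⁻¹ * P) = -((P - 1)⁻¹ * (P - 1)) := by noncomm_ring
  rw [h5, hinv2]

/-- The map `Π_s` of Ekeland P-index theory:
`(Π_s u)(t) = ∫₀ᵗ u(τ) dτ + (P − I)⁻¹ ∫₀ˢ u(τ) dτ`. -/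
noncomputable def PiMap {n : ℕ} (P : Matrix (Fin n ⊕ Fin n) (Fin n ⊕ Fin n) ℝ)
    (s : ℝ) (u : ℝ → (Fin n ⊕ Fin n → ℝ)) (t : ℝ) : Fin n ⊕ Fin n → ℝ :=
  (∫ τ in (0:ℝ)..t, u τ) + (P - 1)⁻¹.mulVec (∫ τ in (0:ℝ)..s, u τ)

theorem stmt1 (n : ℕ) (P : Matrix (Fin n ⊕ Fin n) (Fin n ⊕ Fin n) ℝ)
    (J : Matrix (Fin n ⊕ Fin n) (Fin n ⊕ Fin n) ℝ)
    (hJ : J = Matrix.fromBlocks 0 (-1) 1 0)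
    (horth : Pᵀ * P = 1) (hsymp : Pᵀ * J * P = J)
    (hker : ∀ x : Fin n ⊕ Fin n → ℝ, P.mulVec x = x → x = 0)
    (s : ℝ) (hs : 0 < s) (u v : ℝ → (Fin n ⊕ Fin n → ℝ))
    (hu : MemLp u 2 (volume.restrict (Set.Ioc 0 s)))
    (hv : MemLp v 2 (volume.restrict (Set.Ioc 0 s))) :
    ∫ t in (0:ℝ)..s, (PiMap P s u t) ⬝ᵥ (v t) =
      - ∫ t in (0:ℝ)..s, (u t) ⬝ᵥ (PiMap P s v t) := by
  classical
  have hu' : Integrable u (volume.restrict (Set.Ioc 0 s)) :=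
    hu.integrable (by norm_num : (1:ENNReal) ≤ 2)
  have hv' : Integrable v (volume.restrict (Set.Ioc 0 s)) :=
    hv.integrable (by norm_num : (1:ENNReal) ≤ 2)
  have huo : IntegrableOn u (Set.Ioc 0 s) volume := hu'
  have hvo : IntegrableOn v (Set.Ioc 0 s) volume := hv'
  have hui : ∀ i, IntegrableOn (fun t => u t i) (Set.Ioc 0 s) :=
    fun i => integrable_pi_apply hu' i
  have hvi : ∀ i, IntegrableOn (fun t => v t i) (Set.Ioc 0 s) :=
    fun i => integrable_pi_apply hv' i
  set M := (P - 1)⁻¹ with hMdef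
  set A := ∫ τ in (0:ℝ)..s, u τ with hA
  set B := ∫ τ in (0:ℝ)..s, v τ with hB
  have hAi : ∀ i, A i = ∫ t in Set.Ioc 0 s, u t i := fun i => by
    rw [hA, intervalIntegral.integral_of_le hs.le, integral_pi_apply hu']
  have hBi : ∀ i, B i = ∫ t in Set.Ioc 0 s, v t i := fun i => by
    rw [hB, intervalIntegral.integral_of_le hs.le, integral_pi_apply hv']
  have hdotv_int : ∀ c : Fin n ⊕ Fin n → ℝ,
      Integrable (fun t => c ⬝ᵥ v t) (volume.restrict (Set.Ioc 0 s)) := fun c => by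
    simp only [dotProduct]
    exact integrable_finset_sum _ fun i _ => (hvi i).const_mul _
  have hdotu_int : ∀ c : Fin n ⊕ Fin n → ℝ,
      Integrable (fun t => u t ⬝ᵥ c) (volume.restrict (Set.Ioc 0 s)) := fun c => by
    simp only [dotProduct]
    exact integrable_finset_sum _ fun i _ => (hui i).mul_const _
  have hdotv : ∀ c : Fin n ⊕ Fin n → ℝ,
      (∫ t in Set.Ioc 0 s, c ⬝ᵥ v t) = c ⬝ᵥ B := by
    intro c
    simp only [dotProduct]
    rw [integral_finset_sum _ (fun i _ => (hvi i).const_mul (c i))]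
    refine Finset.sum_congr rfl fun i _ => ?_
    rw [integral_const_mul, ← hBi i]
  have hdotu : ∀ c : Fin n ⊕ Fin n → ℝ,
      (∫ t in Set.Ioc 0 s, u t ⬝ᵥ c) = A ⬝ᵥ c := by
    intro c
    simp only [dotProduct]
    rw [integral_finset_sum _ (fun i _ => (hui i).mul_const (c i))]
    refine Finset.sum_congr rfl fun i _ => ?_
    rw [integral_mul_const, ← hAi i]
  have E1 : (∫ t in (0:ℝ)..s, PiMap P s u t ⬝ᵥ v t)
      = (∑ i, ∫ t in Set.Ioc 0 s, prim s (fun τ => u τ i) t * v t i)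
        + (M.mulVec A) ⬝ᵥ B := by
    rw [intervalIntegral.integral_of_le hs.le]
    have hPiu : ∀ t ∈ Set.Ioc (0:ℝ) s, PiMap P s u t ⬝ᵥ v t
        = (∑ i, prim s (fun τ => u τ i) t * v t i) + (M.mulVec A) ⬝ᵥ v t := by
      intro t ht
      simp only [PiMap, ← hA, ← hMdef, add_dotProduct]
      congr 1
      simp only [dotProduct]
      refine Finset.sum_congr rfl fun i _ => ?_
      congr 1
      rw [intervalIntegral.integral_of_le ht.1.le,
        integral_pi_apply (huo.mono_set (Set.Ioc_subset_Ioc_right ht.2)),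
        ← prim_eq ht.2]
    rw [setIntegral_congr_fun measurableSet_Ioc hPiu,
      integral_add (integrable_finset_sum _ fun i _ =>
        prim_mul_integrable (hui i) (hvi i)) (hdotv_int _),
      integral_finset_sum _ (fun i _ => prim_mul_integrable (hui i) (hvi i)),
      hdotv _]
  have E2 : (∫ t in (0:ℝ)..s, u t ⬝ᵥ PiMap P s v t)
      = (∑ i, ∫ t in Set.Ioc 0 s, u t i * prim s (fun τ => v τ i) t)
        + A ⬝ᵥ (M.mulVec B) := by
    rw [intervalIntegral.integral_of_le hs.le]
    have hPiv : ∀ t ∈ Set.Ioc (0:ℝ) s, u t ⬝ᵥ PiMap P s v t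
        = (∑ i, u t i * prim s (fun τ => v τ i) t) + u t ⬝ᵥ (M.mulVec B) := by
      intro t ht
      simp only [PiMap, ← hB, ← hMdef, dotProduct_add]
      congr 1
      simp only [dotProduct]
      refine Finset.sum_congr rfl fun i _ => ?_
      congr 1
      rw [intervalIntegral.integral_of_le ht.1.le,
        integral_pi_apply (hvo.mono_set (Set.Ioc_subset_Ioc_right ht.2)),
        ← prim_eq ht.2]
    rw [setIntegral_congr_fun measurableSet_Ioc hPiv,
      integral_add (integrable_finset_sum _ fun i _ =>
        mul_prim_integrable (hui i) (hvi i)) (hdotu_int _),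
      integral_finset_sum _ (fun i _ => mul_prim_integrable (hui i) (hvi i)),
      hdotu _]
  have hsum : (∑ i, ∫ t in Set.Ioc 0 s, prim s (fun τ => u τ i) t * v t i)
      + (∑ i, ∫ t in Set.Ioc 0 s, u t i * prim s (fun τ => v τ i) t) = A ⬝ᵥ B := by
    rw [← Finset.sum_add_distrib]
    simp only [dotProduct]
    refine Finset.sum_congr rfl fun i _ => ?_
    rw [hAi i, hBi i]
    exact key hs (hui i) (hvi i)
  have hMM : M + Mᵀ = -1 := matrixM P horth hker
  have halg : (M.mulVec A) ⬝ᵥ B + A ⬝ᵥ (M.mulVec B) = -(A ⬝ᵥ B) := by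
    have h1 : (M.mulVec A) ⬝ᵥ B = A ⬝ᵥ (Mᵀ.mulVec B) := by
      rw [Matrix.dotProduct_mulVec, Matrix.vecMul_transpose]
    rw [h1, ← dotProduct_add, ← Matrix.add_mulVec]
    have h2 : Mᵀ + M = -1 := by rw [add_comm]; exact hMM
    rw [h2, Matrix.neg_mulVec, Matrix.one_mulVec, dotProduct_neg]
  rw [E1, E2]
  linarith [hsum, halg]
end

section
/- Let A : [0,∞) → ℝ^{2n×2n} be continuous with A(t) symmetric positive definite for all t, let P ∈ Sp(2n), and let γ be the fundamental solution of ż = J A(t) z with γ(0) = I. Suppose there exist sequences λ_j → λ in [0,s] (with λ_j ≠ λ) and unit vectors ξ_j → ξ in ℝ^{2n} with γ(λ_j) ξ_j = P ξ_j for all j. Then (A(λ) P ξ, P ξ) = 0, contradicting positive definiteness; hence the set {σ ∈ [0,s] : ker(γ(σ) − P) ≠ 0} has no accumulation point, i.e., it is finite. -/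
open Matrix Filter Topology Metric

lemma aux_dot_mulVec {m : Type*} [Fintype m] (M : Matrix m m ℝ) (x y : m → ℝ) :
    M.mulVec x ⬝ᵥ y = x ⬝ᵥ Mᵀ.mulVec y := by
  rw [dotProduct_comm, Matrix.dotProduct_mulVec, ← Matrix.mulVec_transpose,
    dotProduct_comm]

lemma aux_dot_mulVec2 {m : Type*} [Fintype m] (M N : Matrix m m ℝ) (x y : m → ℝ) :
    M.mulVec x ⬝ᵥ N.mulVec y = x ⬝ᵥ (Mᵀ * N).mulVec y := by
  rw [aux_dot_mulVec, Matrix.mulVec_mulVec]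

lemma aux_hasDerivAt_Jdot {m : Type*} [Fintype m] (J : Matrix m m ℝ)
    {f g : ℝ → m → ℝ} {f' g' : m → ℝ} {t : ℝ}
    (hf : HasDerivAt f f' t) (hg : HasDerivAt g g' t) :
    HasDerivAt (fun τ => J.mulVec (f τ) ⬝ᵥ g τ)
      (J.mulVec f' ⬝ᵥ g t + J.mulVec (f t) ⬝ᵥ g') t := by
  have hfc := hasDerivAt_pi.1 hf
  have hgc := hasDerivAt_pi.1 hg
  simp only [Matrix.mulVec, dotProduct]
  have h : ∀ i : m, HasDerivAt (fun τ => (∑ k, J i k * f τ k) * g τ i)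
      ((∑ k, J i k * f' k) * g t i + (∑ k, J i k * f t k) * g' i) t := fun i =>
    (HasDerivAt.fun_sum fun k _ => (hfc k).const_mul (J i k)).mul (hgc i)
  simpa [Finset.sum_add_distrib] using HasDerivAt.fun_sum (fun i (_ : i ∈ Finset.univ) => h i)

lemma aux_continuous_Jdot {m : Type*} [Fintype m] (J : Matrix m m ℝ) :
    Continuous fun p : (m → ℝ) × (m → ℝ) => J.mulVec p.1 ⬝ᵥ p.2 :=
  Continuous.dotProduct (continuous_const.matrix_mulVec continuous_fst) continuous_snd

set_option maxHeartbeats 1000000 in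
theorem stmt6 (n : ℕ) (s : ℝ) (hs : 0 < s)
    (J : Matrix (Fin n ⊕ Fin n) (Fin n ⊕ Fin n) ℝ)
    (hJ : J = Matrix.fromBlocks 0 (-1) 1 0)
    (A : ℝ → Matrix (Fin n ⊕ Fin n) (Fin n ⊕ Fin n) ℝ)
    (hcont : ContinuousOn A (Set.Ici 0))
    (hpos : ∀ t ∈ Set.Ici (0:ℝ), (A t).PosDef)
    (P : Matrix (Fin n ⊕ Fin n) (Fin n ⊕ Fin n) ℝ)
    (hsymp : Pᵀ * J * P = J)
    (γ : ℝ → Matrix (Fin n ⊕ Fin n) (Fin n ⊕ Fin n) ℝ)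
    (hγ0 : γ 0 = 1)
    (hγ : ∀ c : Fin n ⊕ Fin n → ℝ, ∀ t ∈ Set.Ici (0:ℝ),
      HasDerivAt (fun τ => (γ τ).mulVec c) (J.mulVec ((A t).mulVec ((γ t).mulVec c))) t) :
    {σ ∈ Set.Icc (0:ℝ) s |
      ∃ ξ : Fin n ⊕ Fin n → ℝ, ξ ≠ 0 ∧ (γ σ).mulVec ξ = P.mulVec ξ}.Finite := by
  set S := {σ ∈ Set.Icc (0:ℝ) s |
      ∃ ξ : Fin n ⊕ Fin n → ℝ, ξ ≠ 0 ∧ (γ σ).mulVec ξ = P.mulVec ξ} with hS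
  by_contra hfin
  have hinf : S.Infinite := hfin
  -- basic facts about J
  have hJJ : J * J = -1 := by
    rw [hJ]
    simp [Matrix.fromBlocks_multiply]
    ext (i | i) (j | j) <;> simp [Matrix.fromBlocks, Matrix.one_apply]
  have hJT : Jᵀ = -J := by
    rw [hJ]
    simp [Matrix.fromBlocks_transpose]
    ext (i | i) (j | j) <;> simp [Matrix.fromBlocks]
  have hJTJ : Jᵀ * J = 1 := by
    rw [hJT, Matrix.neg_mul, hJJ, neg_neg]
  -- A is symmetric on [0,∞)
  have hAsymm : ∀ t ∈ Set.Ici (0:ℝ), (A t)ᵀ = A t := by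
    intro t ht
    have h := (hpos t ht).1
    simpa [Matrix.IsHermitian, Matrix.conjTranspose_eq_transpose_of_trivial] using h
  -- P is symplectic: ω(Pu, Pv) = ω(u,v)
  have hωP : ∀ u v : Fin n ⊕ Fin n → ℝ,
      J.mulVec (P.mulVec u) ⬝ᵥ P.mulVec v = J.mulVec u ⬝ᵥ v := by
    intro u v
    rw [Matrix.mulVec_mulVec, aux_dot_mulVec2, aux_dot_mulVec, hJT,
      Matrix.transpose_mul, hJT, Matrix.mul_neg, Matrix.neg_mul, hsymp]
  -- γ(t) is symplectic for t ≥ 0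
  have hωγ : ∀ u v : Fin n ⊕ Fin n → ℝ, ∀ t ∈ Set.Ici (0:ℝ),
      J.mulVec ((γ t).mulVec u) ⬝ᵥ (γ t).mulVec v = J.mulVec u ⬝ᵥ v := by
    intro u v t ht
    set g : ℝ → ℝ := fun τ => J.mulVec ((γ τ).mulVec u) ⬝ᵥ (γ τ).mulVec v with hg
    have hd : ∀ τ ∈ Set.Ici (0:ℝ), HasDerivAt g 0 τ := by
      intro τ hτ
      have h := aux_hasDerivAt_Jdot J (hγ u τ hτ) (hγ v τ hτ)
      convert h using 1
      set x := (γ τ).mulVec u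
      set y := (γ τ).mulVec v
      have h1 : J.mulVec (J.mulVec ((A τ).mulVec x)) ⬝ᵥ y = -((A τ).mulVec x ⬝ᵥ y) := by
        rw [Matrix.mulVec_mulVec, hJJ, Matrix.neg_mulVec, Matrix.one_mulVec,
          neg_dotProduct]
      have h2 : J.mulVec x ⬝ᵥ J.mulVec ((A τ).mulVec y) = x ⬝ᵥ (A τ).mulVec y := by
        rw [aux_dot_mulVec2, hJTJ, Matrix.one_mulVec]
      have h3 : (A τ).mulVec x ⬝ᵥ y = x ⬝ᵥ (A τ).mulVec y := by
        rw [aux_dot_mulVec, hAsymm τ hτ]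
      rw [h1, h3, h2]
      ring
    have hconst := constant_of_has_deriv_right_zero
      (f := g) (a := 0) (b := t)
      (fun τ hτ => (hd τ (Set.mem_Icc.1 hτ).1).continuousAt.continuousWithinAt)
      (fun τ hτ => ((hd τ (Set.mem_Ico.1 hτ).1).hasDerivWithinAt))
    have := hconst t ⟨ht, le_rfl⟩
    simpa [hg, hγ0, Matrix.one_mulVec] using this
  -- invertibility facts
  have hdetJ : J.det * J.det = 1 := by
    have : (J * J).det = ((-1 : Matrix (Fin n ⊕ Fin n) (Fin n ⊕ Fin n) ℝ)).det := by rw [hJJ]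
    rw [Matrix.det_mul] at this
    rw [this]
    have hneg : ((-1 : Matrix (Fin n ⊕ Fin n) (Fin n ⊕ Fin n) ℝ)) =
        -(1 : Matrix (Fin n ⊕ Fin n) (Fin n ⊕ Fin n) ℝ) := rfl
    rw [hneg, Matrix.det_neg, Matrix.det_one, mul_one, Fintype.card_sum, Fintype.card_fin]
    exact Even.neg_one_pow ⟨n, rfl⟩
  have hdetJ0 : J.det ≠ 0 := by
    intro h
    rw [h, mul_zero] at hdetJ
    exact zero_ne_one hdetJ
  have hdetP : IsUnit P.det := by
    have h1 : P.det * J.det * P.det = J.det := by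
      have := congrArg Matrix.det hsymp
      simpa [Matrix.det_mul, Matrix.det_transpose] using this
    have h2 : P.det * P.det = 1 := by
      have h3 : (P.det * P.det) * J.det = 1 * J.det := by rw [one_mul]; linarith [h1]
      exact mul_right_cancel₀ hdetJ0 h3
    exact IsUnit.of_mul_eq_one _ h2
  have hPinj : ∀ w : Fin n ⊕ Fin n → ℝ, P.mulVec w = 0 → w = 0 := by
    intro w hw
    have := congrArg (fun z => P⁻¹.mulVec z) hw
    simpa [Matrix.mulVec_mulVec, Matrix.nonsing_inv_mul P hdetP] using this
  -- accumulation point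
  have hSsub : S ⊆ Set.Icc 0 s := fun σ hσ => hσ.1
  obtain ⟨lam, hlamIcc, hacc⟩ := hinf.exists_accPt_of_subset_isCompact isCompact_Icc hSsub
  have hlam0 : lam ∈ Set.Ici (0:ℝ) := hlamIcc.1
  have hball : ∀ j : ℕ, ∃ y, (y ∈ Metric.ball lam (1/(j+1)) ∩ S) ∧ y ≠ lam := by
    intro j
    obtain ⟨y, hy, hne⟩ := accPt_iff_nhds.1 hacc (Metric.ball lam (1/(j+1)))
      (Metric.ball_mem_nhds _ (by positivity))
    exact ⟨y, hy, hne⟩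
  choose σ0 hσ0 using hball
  have hσ0S : ∀ j, σ0 j ∈ S := fun j => (hσ0 j).1.2
  have hσ0ne : ∀ j, σ0 j ≠ lam := fun j => (hσ0 j).2
  have hσ0tend : Tendsto σ0 atTop (𝓝 lam) := by
    rw [tendsto_iff_dist_tendsto_zero]
    exact squeeze_zero (fun j => dist_nonneg)
      (fun j => le_of_lt (Metric.mem_ball.1 (hσ0 j).1.1))
      tendsto_one_div_add_atTop_nhds_zero_nat
  -- unit eigenvectors
  choose ξv hξv0 hξveq using fun j => (hσ0S j).2
  set η : ℕ → (Fin n ⊕ Fin n → ℝ) := fun j => (‖ξv j‖)⁻¹ • ξv j with hηdef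
  have hηnorm : ∀ j, ‖η j‖ = 1 := fun j => norm_smul_inv_norm (𝕜 := ℝ) (hξv0 j)
  have hηeq : ∀ j, (γ (σ0 j)).mulVec (η j) = P.mulVec (η j) := by
    intro j
    simp only [hηdef, Matrix.mulVec_smul, hξveq j]
  -- convergent subsequence on the unit sphere
  obtain ⟨xiL, hxiLmem, φ, hφmono, hζtend⟩ :=
    (isCompact_sphere (0 : (Fin n ⊕ Fin n) → ℝ) 1).tendsto_subseq
      (fun j => mem_sphere_zero_iff_norm.2 (hηnorm j))
  have hxiLnorm : ‖xiL‖ = 1 := mem_sphere_zero_iff_norm.1 hxiLmem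
  have hxiLne : xiL ≠ 0 := by
    intro h
    rw [h, norm_zero] at hxiLnorm
    exact zero_ne_one hxiLnorm
  set τf : ℕ → ℝ := σ0 ∘ φ with hτfdef
  set ζ : ℕ → (Fin n ⊕ Fin n → ℝ) := η ∘ φ with hζdef
  have hτtend : Tendsto τf atTop (𝓝 lam) := hσ0tend.comp hφmono.tendsto_atTop
  have hτne : ∀ j, τf j ≠ lam := fun j => hσ0ne (φ j)
  have hτIci : ∀ j, τf j ∈ Set.Ici (0:ℝ) := fun j => (hσ0S (φ j)).1.1
  have hζeq : ∀ j, (γ (τf j)).mulVec (ζ j) = P.mulVec (ζ j) := fun j => hηeq (φ j)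
  -- entrywise convergence of the matrices γ (τf j) to γ lam
  have hγent : ∀ i k, Tendsto (fun j => γ (τf j) i k) atTop (𝓝 (γ lam i k)) := by
    intro i k
    have hcol : ContinuousAt (fun σ => (γ σ).mulVec (Pi.single k 1)) lam :=
      (hγ (Pi.single k 1) lam hlam0).continuousAt
    have hentry : ContinuousAt (fun σ => γ σ i k) lam := by
      have := (continuous_apply i).continuousAt.comp hcol
      simpa [Function.comp_def, Matrix.mulVec_single] using this
    exact hentry.tendsto.comp hτtend
  have hζent : ∀ i, Tendsto (fun j => ζ j i) atTop (𝓝 (xiL i)) :=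
    fun i => tendsto_pi_nhds.1 hζtend i
  -- entrywise limits through mulVec
  have hlim1 : ∀ i, Tendsto (fun j => ((γ (τf j)).mulVec (ζ j)) i) atTop
      (𝓝 (((γ lam).mulVec xiL) i)) := by
    intro i
    simp only [Matrix.mulVec, dotProduct]
    exact tendsto_finset_sum _ (fun k _ => (hγent i k).mul (hζent k))
  have hlim2 : ∀ i, Tendsto (fun j => (P.mulVec (ζ j)) i) atTop (𝓝 ((P.mulVec xiL) i)) := by
    intro i
    simp only [Matrix.mulVec, dotProduct]
    exact tendsto_finset_sum _ (fun k _ => tendsto_const_nhds.mul (hζent k))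
  have hfix : (γ lam).mulVec xiL = P.mulVec xiL := by
    funext i
    exact tendsto_nhds_unique ((hlim1 i).congr (fun j => congrFun (hζeq j) i)) (hlim2 i)
  -- slope converges to the derivative, componentwise
  set D : (Fin n ⊕ Fin n) → ℝ := J.mulVec ((A lam).mulVec ((γ lam).mulVec xiL)) with hDdef
  have hderiv : HasDerivAt (fun σ => (γ σ).mulVec xiL) D lam := hγ xiL lam hlam0
  have hτne' : Tendsto τf atTop (𝓝[≠] lam) :=
    tendsto_nhdsWithin_of_tendsto_nhds_of_eventually_within _ hτtend
      (Filter.Eventually.of_forall (fun j => hτne j))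
  set sl : ℕ → (Fin n ⊕ Fin n) → ℝ :=
    fun j => (τf j - lam)⁻¹ • ((γ (τf j)).mulVec xiL - (γ lam).mulVec xiL) with hsldef
  have hsl : ∀ i, Tendsto (fun j => sl j i) atTop (𝓝 (D i)) := by
    intro i
    have hdi : HasDerivAt (fun σ => ((γ σ).mulVec xiL) i) (D i) lam :=
      hasDerivAt_pi.1 hderiv i
    have h1 := (hasDerivAt_iff_tendsto_slope.1 hdi).comp hτne'
    refine h1.congr (fun j => ?_)
    simp only [Function.comp_apply, slope_def_field, hsldef, Pi.smul_apply, Pi.sub_apply,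
      smul_eq_mul, div_eq_inv_mul]
  -- the symplectic product vanishes along the sequence
  have hzero : ∀ j, J.mulVec (P.mulVec (ζ j)) ⬝ᵥ sl j = 0 := by
    intro j
    rw [hsldef]
    rw [dotProduct_smul, dotProduct_sub]
    have e1 : J.mulVec (P.mulVec (ζ j)) ⬝ᵥ (γ (τf j)).mulVec xiL = J.mulVec (ζ j) ⬝ᵥ xiL := by
      rw [← hζeq j]
      exact hωγ _ _ _ (hτIci j)
    have e2 : J.mulVec (P.mulVec (ζ j)) ⬝ᵥ (γ lam).mulVec xiL = J.mulVec (ζ j) ⬝ᵥ xiL := by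
      rw [hfix]
      exact hωP _ _
    rw [e1, e2, sub_self, smul_zero]
  -- pass to the limit
  have hlimzero : Tendsto (fun j => J.mulVec (P.mulVec (ζ j)) ⬝ᵥ sl j) atTop
      (𝓝 (J.mulVec (P.mulVec xiL) ⬝ᵥ D)) := by
    simp only [Matrix.mulVec, dotProduct]
    refine tendsto_finset_sum _ (fun i _ => Tendsto.mul ?_ ?_)
    · refine tendsto_finset_sum _ (fun k _ => Tendsto.const_mul _ ?_)
      have := hlim2 k
      simpa only [Matrix.mulVec, dotProduct] using this
    · exact hsl i
  have heq : (fun j => J.mulVec (P.mulVec (ζ j)) ⬝ᵥ sl j) = fun _ => (0:ℝ) := funext hzero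
  rw [heq] at hlimzero
  have hDzero : J.mulVec (P.mulVec xiL) ⬝ᵥ D = 0 :=
    tendsto_nhds_unique hlimzero tendsto_const_nhds
  -- contradiction with positive definiteness
  set x : (Fin n ⊕ Fin n) → ℝ := P.mulVec xiL with hxdef
  have hfinal : x ⬝ᵥ (A lam).mulVec x = 0 := by
    have h0 : J.mulVec x ⬝ᵥ J.mulVec ((A lam).mulVec x) = 0 := by
      rw [← hDzero, hDdef, hfix]
    rwa [aux_dot_mulVec2, hJTJ, Matrix.one_mulVec] at h0
  have hxne : x ≠ 0 := fun h => hxiLne (hPinj _ h)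
  have hpd := (hpos lam hlam0).dotProduct_mulVec_pos hxne
  rw [show star x = x from star_trivial x] at hpd
  rw [hfinal] at hpd
  exact lt_irrefl 0 hpd
end

section
/- Let P be an orthogonal symplectic matrix, H : ℝ^{2n} → ℝ a C² function with H ∘ P = H, and x̄ a solution of ẋ = J H'(x) with x̄(t+1) = P x̄(t) for all t. Let γ be the fundamental solution of ż = J H''(x̄(t)) z with γ(0) = I. Then γ(t+1) = P γ(t) P⁻¹ γ(1) for all t ≥ 0. -/
open Matrix

section Aux

variable {n : ℕ}

local notation "Esp" => EuclideanSpace ℝ (Fin n ⊕ Fin n)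

lemma aux_mulE (A B : Matrix (Fin n ⊕ Fin n) (Fin n ⊕ Fin n) ℝ) (w : Esp) :
    Matrix.toEuclideanLin (A * B) w = Matrix.toEuclideanLin A (Matrix.toEuclideanLin B w) := by
  simp [Matrix.toEuclideanLin_apply, Matrix.mulVec_mulVec]

lemma aux_grad_comm (P : Matrix (Fin n ⊕ Fin n) (Fin n ⊕ Fin n) ℝ)
    (hPPt : P * Pᵀ = 1)
    (H : Esp → ℝ) (hHdiff : Differentiable ℝ H)
    (hinvar : ∀ y : Esp, H (Matrix.toEuclideanLin P y) = H y) (y : Esp) :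
    Matrix.toEuclideanLin P (gradient H y) = gradient H (Matrix.toEuclideanLin P y) := by
  set LP : Esp →L[ℝ] Esp := LinearMap.toContinuousLinearMap (Matrix.toEuclideanLin P) with hLP
  have hLPa : ∀ w : Esp, LP w = Matrix.toEuclideanLin P w := fun w => rfl
  have hfd : fderiv ℝ H y = (fderiv ℝ H (LP y)).comp LP := by
    have hc : H = fun z => H (LP z) := by
      funext z; exact (hinvar z).symm
    conv_lhs => rw [hc]
    exact (((hHdiff (LP y)).hasFDerivAt).comp y LP.hasFDerivAt).fderiv
  have hPt : gradient H y = Matrix.toEuclideanLin Pᵀ (gradient H (LP y)) := by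
    unfold gradient
    apply ext_inner_right ℝ
    intro w
    rw [InnerProductSpace.toDual_symm_apply]
    have hadj : Matrix.toEuclideanLin Pᵀ
        = LinearMap.adjoint (Matrix.toEuclideanLin (𝕜 := ℝ) P) := by
      rw [← Matrix.conjTranspose_eq_transpose_of_trivial]
      exact Matrix.toEuclideanLin_conjTranspose_eq_adjoint P
    rw [hadj, LinearMap.adjoint_inner_left, hfd]
    simp only [ContinuousLinearMap.coe_comp', Function.comp_apply]
    rw [← InnerProductSpace.toDual_symm_apply (𝕜 := ℝ) (E := Esp)
      (x := LP w) (y := fderiv ℝ H (LP y))]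
    rfl
  have h1 : ∀ w : Esp, Matrix.toEuclideanLin (1 : Matrix (Fin n ⊕ Fin n) (Fin n ⊕ Fin n) ℝ) w = w := by
    intro w; simp [Matrix.toEuclideanLin_apply, Matrix.one_mulVec]
  rw [hPt, ← aux_mulE, hPPt, h1]
  rfl

end Aux

theorem stmt10 (n : ℕ)
    (J P : Matrix (Fin n ⊕ Fin n) (Fin n ⊕ Fin n) ℝ)
    (hJ : J = Matrix.fromBlocks 0 (-1) 1 0)
    (horth : Pᵀ * P = 1) (hsymp : Pᵀ * J * P = J)
    (H : EuclideanSpace ℝ (Fin n ⊕ Fin n) → ℝ)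
    (hH : ContDiff ℝ 2 H)
    (hinvar : ∀ y : EuclideanSpace ℝ (Fin n ⊕ Fin n), H (Matrix.toEuclideanLin P y) = H y)
    (x : ℝ → EuclideanSpace ℝ (Fin n ⊕ Fin n))
    (hx : ∀ t : ℝ, HasDerivAt x (Matrix.toEuclideanLin J (gradient H (x t))) t)
    (hxper : ∀ t : ℝ, x (t + 1) = Matrix.toEuclideanLin P (x t))
    (γ : ℝ → Matrix (Fin n ⊕ Fin n) (Fin n ⊕ Fin n) ℝ)
    (hγ0 : γ 0 = 1)
    (hγ : ∀ c : EuclideanSpace ℝ (Fin n ⊕ Fin n), ∀ t : ℝ,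
      HasDerivAt (fun τ => Matrix.toEuclideanLin (γ τ) c)
        (Matrix.toEuclideanLin J
          (fderiv ℝ (gradient H) (x t) (Matrix.toEuclideanLin (γ t) c))) t) :
    ∀ t : ℝ, 0 ≤ t → γ (t + 1) = P * γ t * P⁻¹ * γ 1 := by
  classical
  have hPinv : P⁻¹ = Pᵀ := Matrix.inv_eq_left_inv horth
  have hPPt : P * Pᵀ = 1 := by rw [mul_eq_one_comm]; exact horth
  have hcomm : J * P = P * J := by
    calc J * P = (P * Pᵀ) * J * P := by rw [hPPt, Matrix.one_mul]
      _ = P * (Pᵀ * J * P) := by simp only [Matrix.mul_assoc]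
      _ = P * J := by rw [hsymp]
  set LP : EuclideanSpace ℝ (Fin n ⊕ Fin n) →L[ℝ] EuclideanSpace ℝ (Fin n ⊕ Fin n) :=
    LinearMap.toContinuousLinearMap (Matrix.toEuclideanLin P) with hLP
  set LJ : EuclideanSpace ℝ (Fin n ⊕ Fin n) →L[ℝ] EuclideanSpace ℝ (Fin n ⊕ Fin n) :=
    LinearMap.toContinuousLinearMap (Matrix.toEuclideanLin J) with hLJ
  have hLPa : ∀ w, LP w = Matrix.toEuclideanLin P w := fun w => rfl
  have hLJa : ∀ w, LJ w = Matrix.toEuclideanLin J w := fun w => rfl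
  -- smoothness
  have hHdiff : Differentiable ℝ H := hH.differentiable (by norm_num)
  have hG : ContDiff ℝ 1 (gradient H) := by
    have h2 : ContDiff ℝ ((1 : ℕ) + 1) H := by exact_mod_cast hH
    rw [contDiff_succ_iff_fderiv] at h2
    exact (InnerProductSpace.toDual ℝ _).symm.contDiff.comp h2.2.2
  have hGdiff : Differentiable ℝ (gradient H) := hG.differentiable (by norm_num)
  have hDcont : Continuous (fun y => fderiv ℝ (gradient H) y) :=
    hG.continuous_fderiv (by norm_num)
  have key1 : ∀ y, Matrix.toEuclideanLin P (gradient H y)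
      = gradient H (Matrix.toEuclideanLin P y) :=
    aux_grad_comm P hPPt H hHdiff hinvar
  -- key identity 2 : Hessian commutation
  have key2 : ∀ (y w : EuclideanSpace ℝ (Fin n ⊕ Fin n)),
      Matrix.toEuclideanLin P (fderiv ℝ (gradient H) y w)
        = fderiv ℝ (gradient H) (Matrix.toEuclideanLin P y) (Matrix.toEuclideanLin P w) := by
    intro y w
    have h1 : HasFDerivAt (fun z => LP (gradient H z))
        (LP.comp (fderiv ℝ (gradient H) y)) y :=
      LP.hasFDerivAt.comp y (hGdiff y).hasFDerivAt
    have h2 : HasFDerivAt (fun z => LP (gradient H z))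
        ((fderiv ℝ (gradient H) (LP y)).comp LP) y := by
      have h2' : HasFDerivAt (fun z => gradient H (LP z))
          ((fderiv ℝ (gradient H) (LP y)).comp LP) y :=
        ((hGdiff (LP y)).hasFDerivAt).comp y LP.hasFDerivAt
      have heq : (fun z => gradient H (LP z)) = (fun z => LP (gradient H z)) := by
        funext z
        show gradient H (Matrix.toEuclideanLin P z) = Matrix.toEuclideanLin P (gradient H z)
        exact (key1 z).symm
      rw [← heq]
      exact h2'
    have := h1.unique h2
    have happ := congrArg (fun T : _ →L[ℝ] _ => T w) this
    simpa [hLPa] using happ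
  have keyJP : ∀ w, Matrix.toEuclideanLin P (Matrix.toEuclideanLin J w)
      = Matrix.toEuclideanLin J (Matrix.toEuclideanLin P w) := by
    intro w
    rw [← aux_mulE, ← aux_mulE, ← hcomm]
  -- continuity of x
  have hxcont : Continuous x := continuous_iff_continuousAt.mpr fun t => (hx t).continuousAt
  intro t₀ ht₀
  -- the time-dependent vector field, clamped to [0, t₀]
  set D : EuclideanSpace ℝ (Fin n ⊕ Fin n) →
      (EuclideanSpace ℝ (Fin n ⊕ Fin n) →L[ℝ] EuclideanSpace ℝ (Fin n ⊕ Fin n)) :=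
    fun y => fderiv ℝ (gradient H) y with hDdef
  set A : ℝ → (EuclideanSpace ℝ (Fin n ⊕ Fin n) →L[ℝ] EuclideanSpace ℝ (Fin n ⊕ Fin n)) :=
    fun s => LJ.comp (D (x (s + 1))) with hAdef
  have hAcont : Continuous A := by
    apply Continuous.comp (ContinuousLinearMap.compL ℝ _ _ _ LJ).continuous
    exact hDcont.comp (hxcont.comp (continuous_id.add continuous_const))
  set proj : ℝ → ℝ := fun τ => max 0 (min τ t₀) with hprojdef
  have hproj_mem : ∀ τ, proj τ ∈ Set.Icc (0:ℝ) t₀ :=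
    fun τ => ⟨le_max_left _ _, max_le ht₀ (min_le_right _ _)⟩
  have hproj_id : ∀ τ ∈ Set.Ico (0:ℝ) t₀, proj τ = τ := by
    intro τ hτ
    simp only [hprojdef]
    rw [min_eq_left hτ.2.le, max_eq_right hτ.1]
  set v : ℝ → EuclideanSpace ℝ (Fin n ⊕ Fin n) → EuclideanSpace ℝ (Fin n ⊕ Fin n) :=
    fun τ z => A (proj τ) z with hvdef
  obtain ⟨C, hC⟩ := isCompact_Icc.exists_bound_of_continuousOn
    (s := Set.Icc (0:ℝ) t₀) hAcont.continuousOn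
  have hlip : ∀ τ, LipschitzWith C.toNNReal (v τ) := by
    intro τ
    apply (A (proj τ)).lipschitz.weaken
    have hb := hC _ (hproj_mem τ)
    calc ‖A (proj τ)‖₊ = Real.toNNReal ‖A (proj τ)‖ := by
          rw [← coe_nnnorm, Real.toNNReal_coe]
      _ ≤ C.toNNReal := Real.toNNReal_mono hb
  -- the two solutions
  have main : ∀ c : EuclideanSpace ℝ (Fin n ⊕ Fin n),
      Matrix.toEuclideanLin (γ (t₀ + 1)) c
        = Matrix.toEuclideanLin (P * (γ t₀ * (P⁻¹ * γ 1))) c := by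
    intro c
    set c' : EuclideanSpace ℝ (Fin n ⊕ Fin n) := Matrix.toEuclideanLin (P⁻¹ * γ 1) c with hc'
    set f : ℝ → EuclideanSpace ℝ (Fin n ⊕ Fin n) :=
      fun τ => Matrix.toEuclideanLin (γ (τ + 1)) c with hfdef
    set g : ℝ → EuclideanSpace ℝ (Fin n ⊕ Fin n) :=
      fun τ => Matrix.toEuclideanLin P (Matrix.toEuclideanLin (γ τ) c') with hgdef
    have hfD : ∀ τ, HasDerivAt f (LJ (D (x (τ + 1)) (f τ))) τ := by
      intro τ
      have hshift : HasDerivAt (fun s : ℝ => s + 1) 1 τ := (hasDerivAt_id τ).add_const 1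
      have h := HasDerivAt.scomp τ (hγ c (τ + 1)) hshift
      rw [one_smul] at h
      exact h
    have hgD : ∀ τ, HasDerivAt g (LJ (D (x (τ + 1)) (g τ))) τ := by
      intro τ
      have h := LP.hasFDerivAt.comp_hasDerivAt τ (hγ c' τ)
      have hval : LP (Matrix.toEuclideanLin J
            (fderiv ℝ (gradient H) (x τ) (Matrix.toEuclideanLin (γ τ) c')))
          = LJ (D (x (τ + 1)) (g τ)) := by
        rw [hLPa, keyJP, hLJa, key2, ← hxper]
      rw [hval] at h
      exact h
    have h0 : f 0 = g 0 := by
      have hm : P * (γ 0 * (P⁻¹ * γ 1)) = γ (0 + 1) := by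
        rw [hγ0, Matrix.one_mul, ← Matrix.mul_assoc, hPinv, hPPt, Matrix.one_mul, zero_add]
      show Matrix.toEuclideanLin (γ (0 + 1)) c
        = Matrix.toEuclideanLin P
            (Matrix.toEuclideanLin (γ 0) (Matrix.toEuclideanLin (P⁻¹ * γ 1) c))
      rw [← hm, aux_mulE, aux_mulE]
    have hfc : ContinuousOn f (Set.Icc 0 t₀) :=
      (continuous_iff_continuousAt.mpr fun τ => (hfD τ).continuousAt).continuousOn
    have hgc : ContinuousOn g (Set.Icc 0 t₀) :=
      (continuous_iff_continuousAt.mpr fun τ => (hgD τ).continuousAt).continuousOn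
    have hf' : ∀ τ ∈ Set.Ico (0:ℝ) t₀, HasDerivWithinAt f (v τ (f τ)) (Set.Ici τ) τ := by
      intro τ hτ
      have : v τ (f τ) = LJ (D (x (τ + 1)) (f τ)) := by
        simp only [hvdef, hAdef, hproj_id τ hτ]
        rfl
      rw [this]
      exact (hfD τ).hasDerivWithinAt
    have hg' : ∀ τ ∈ Set.Ico (0:ℝ) t₀, HasDerivWithinAt g (v τ (g τ)) (Set.Ici τ) τ := by
      intro τ hτ
      have : v τ (g τ) = LJ (D (x (τ + 1)) (g τ)) := by
        simp only [hvdef, hAdef, hproj_id τ hτ]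
        rfl
      rw [this]
      exact (hgD τ).hasDerivWithinAt
    have h := ODE_solution_unique hlip hfc hf' hgc hg' h0 (Set.right_mem_Icc.mpr ht₀)
    have h2 : Matrix.toEuclideanLin P
        (Matrix.toEuclideanLin (γ t₀) (Matrix.toEuclideanLin (P⁻¹ * γ 1) c))
        = Matrix.toEuclideanLin (P * (γ t₀ * (P⁻¹ * γ 1))) c := by
      simp only [aux_mulE]
    exact h.trans h2
  have : Matrix.toEuclideanLin (γ (t₀ + 1))
      = Matrix.toEuclideanLin (P * (γ t₀ * (P⁻¹ * γ 1))) := LinearMap.ext main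
  have hγeq := Matrix.toEuclideanLin.injective this
  rw [hγeq, Matrix.mul_assoc, Matrix.mul_assoc]
end
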